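/- Let p be prime, 0 < q < p, with negative-regular continued fraction p/q = [e_1,...,e_s], and let q' be the inverse of q mod p with 0 < q' < p. Then 12·s(q,p) - Σ_{i=1}^{s} e_i + 3s = (q + q')/p. -/

import Mathlib

/-- The sawtooth function `((x)) = x - ⌊x⌋ - 1/2` for non-integer `x`, and `0` for integer `x`. -/
def saw (x : ℚ) : ℚ := if x.den = 1 then 0 else x - ⌊x⌋ - 1/2

/-- The Dedekind sum `s(q,p) = Σ_{i=1}^{p-1} ((i/p))((iq/p))`. -/
noncomputable def dedekindSum (q p : ℤ) : ℚ :=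
  ∑ i ∈ Finset.Icc (1 : ℤ) (p - 1), saw ((i : ℚ) / p) * saw ((i * q : ℚ) / p)

/-- The value of the negative-regular continued fraction
`[e_1,...,e_s] = e_1 - 1/(e_2 - 1/(⋯ - 1/e_s))`. -/
def ncf : List ℤ → ℚ
  | [] => 0
  | [e] => (e : ℚ)
  | e :: f :: rest => (e : ℚ) - 1 / ncf (f :: rest)

open Finset

lemma den_one_iff (x : ℚ) : x.den = 1 ↔ ∃ n : ℤ, x = (n:ℚ) := by
  constructor
  · intro h; exact ⟨x.num, ((Rat.den_eq_one_iff _).mp h).symm⟩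
  · rintro ⟨n, rfl⟩; exact Rat.den_intCast n

lemma floor_idiv (a b : ℤ) (hb : 0 < b) : ⌊(a:ℚ)/b⌋ = a / b := by
  have h1 : (b:ℚ) = ((b.toNat : ℕ) : ℚ) := by
    norm_cast; rw [Int.toNat_of_nonneg hb.le]
  have h2 : b = (b.toNat : ℤ) := (Int.toNat_of_nonneg hb.le).symm
  rw [h1, Rat.floor_intCast_div_natCast, ← h2]

lemma den_div_ne_one (a b : ℤ) (hb : 0 < b) (h : ¬ b ∣ a) : ((a:ℚ)/b).den ≠ 1 := by
  intro hd
  obtain ⟨n, hn⟩ := (den_one_iff _).mp hd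
  apply h
  refine ⟨n, ?_⟩
  have hb' : (b:ℚ) ≠ 0 := by positivity
  field_simp at hn
  rw [mul_comm] at hn
  exact_mod_cast (hn.trans (mul_comm _ _))

lemma saw_div_eq (a b : ℤ) (hb : 0 < b) (h : ¬ b ∣ a) :
    saw ((a:ℚ)/b) = (a:ℚ)/b - ((a / b : ℤ):ℚ) - 1/2 := by
  rw [saw, if_neg (den_div_ne_one a b hb h), floor_idiv a b hb]

lemma saw_int_div_self (a b : ℤ) (hb : 0 < b) (h : b ∣ a) : saw ((a:ℚ)/b) = 0 := by
  obtain ⟨c, rfl⟩ := h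
  have hb' : (b:ℚ) ≠ 0 := by positivity
  have : ((b*c:ℤ):ℚ)/b = ((c:ℤ):ℚ) := by push_cast; field_simp
  rw [this, saw, if_pos (Rat.den_intCast c)]

lemma saw_add_int (x : ℚ) (n : ℤ) : saw (x + n) = saw x := by
  unfold saw
  have hden : (x + n).den = 1 ↔ x.den = 1 := by
    rw [den_one_iff, den_one_iff]
    constructor
    · rintro ⟨m, hm⟩; exact ⟨m - n, by push_cast; linarith⟩
    · rintro ⟨m, rfl⟩; exact ⟨m + n, by push_cast; ring⟩
  by_cases h : x.den = 1
  · rw [if_pos h, if_pos (hden.mpr h)]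
  · rw [if_neg h, if_neg (fun hh => h (hden.mp hh)), Int.floor_add_intCast]
    push_cast; ring

lemma saw_neg (x : ℚ) : saw (-x) = - saw x := by
  unfold saw
  rw [Rat.neg_den]
  by_cases h : x.den = 1
  · simp [h]
  · rw [if_neg h, if_neg h]
    have hne : x ≠ (⌊x⌋ : ℚ) := by
      intro hx; exact h ((den_one_iff x).mpr ⟨⌊x⌋, hx⟩)
    have hceil : ⌈x⌉ = ⌊x⌋ + 1 := by
      rw [Int.ceil_eq_iff]
      constructor
      · push_cast
        have := Int.floor_le x
        rcases lt_or_eq_of_le this with h' | h'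
        · linarith
        · exact absurd h'.symm hne
      · push_cast; exact (Int.lt_floor_add_one x).le
    rw [Int.floor_neg, hceil]
    push_cast; ring

lemma Icc_int_succ (a b : ℤ) (h : a ≤ b + 1) :
    Icc a (b+1) = insert (b+1) (Icc a b) := by
  ext x; simp only [mem_Icc, mem_insert]; omega

lemma sum_Icc_int_succ (a b : ℤ) (h : a ≤ b + 1) (f : ℤ → ℚ) :
    ∑ i ∈ Icc a (b+1), f i = (∑ i ∈ Icc a b, f i) + f (b+1) := by
  rw [Icc_int_succ a b h, Finset.sum_insert (by simp)]
  ring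

lemma sum_Icc_id_nat (n : ℕ) : ∑ i ∈ Icc (1:ℤ) n, (i:ℚ) = n*(n+1)/2 := by
  induction n with
  | zero => simp
  | succ m ih =>
    rw [show ((m+1:ℕ):ℤ) = (m:ℤ) + 1 by push_cast; ring,
      sum_Icc_int_succ 1 m (by omega), ih]
    push_cast; ring

lemma sum_Icc_sq_nat (n : ℕ) : ∑ i ∈ Icc (1:ℤ) n, (i:ℚ)^2 = n*(n+1)*(2*n+1)/6 := by
  induction n with
  | zero => simp
  | succ m ih =>
    rw [show ((m+1:ℕ):ℤ) = (m:ℤ) + 1 by push_cast; ring,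
      sum_Icc_int_succ 1 m (by omega), ih]
    push_cast; ring

lemma sum_Icc_id (k : ℤ) (hk : 1 ≤ k) : ∑ i ∈ Icc (1:ℤ) (k-1), (i:ℚ) = k*(k-1)/2 := by
  have h : k - 1 = ((k-1).toNat : ℤ) := (Int.toNat_of_nonneg (by omega)).symm
  have hc : ((k-1).toNat : ℚ) = (k:ℚ) - 1 := by
    rw [show ((k-1).toNat : ℚ) = (((k-1).toNat : ℤ) : ℚ) by push_cast; ring, ← h]
    push_cast; ring
  rw [h, sum_Icc_id_nat, hc]; ring

lemma sum_Icc_sq (k : ℤ) (hk : 1 ≤ k) : ∑ i ∈ Icc (1:ℤ) (k-1), (i:ℚ)^2 = k*(k-1)*(2*k-1)/6 := by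
  have h : k - 1 = ((k-1).toNat : ℤ) := (Int.toNat_of_nonneg (by omega)).symm
  have hc : ((k-1).toNat : ℚ) = (k:ℚ) - 1 := by
    rw [show ((k-1).toNat : ℚ) = (((k-1).toNat : ℤ) : ℚ) by push_cast; ring, ← h]
    push_cast; ring
  rw [h, sum_Icc_sq_nat, hc]; ring

lemma not_dvd_mul (h k i : ℤ) (hcop : IsCoprime h k) (hi : i ∈ Icc (1:ℤ) (k-1)) :
    ¬ k ∣ h * i := by
  simp only [mem_Icc] at hi
  intro hdvd
  have : k ∣ i := (IsCoprime.dvd_of_dvd_mul_left (hcop.symm) hdvd)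
  have := Int.le_of_dvd (by omega) this
  omega

lemma mod_mem (h k i : ℤ) (hk : 0 < k) (hcop : IsCoprime h k) (hi : i ∈ Icc (1:ℤ) (k-1)) :
    (h * i) % k ∈ Icc (1:ℤ) (k-1) := by
  have h1 := Int.emod_nonneg (h*i) (by omega : k ≠ 0)
  have h2 := Int.emod_lt_of_pos (h*i) hk
  have h3 : (h*i) % k ≠ 0 := by
    intro h0
    exact not_dvd_mul h k i hcop hi (Int.dvd_of_emod_eq_zero h0)
  simp only [mem_Icc]; omega

lemma mul_mod_cancel (u h i k v : ℤ) (hk : 0 < k) (huv : u * h + v * k = 1)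
    (hi : 0 ≤ i) (hik : i < k) : (u * ((h*i) % k)) % k = i := by
  have h1 : Int.ModEq k ((h*i) % k) (h*i) := Int.emod_emod_of_dvd _ dvd_rfl
  have h2 : Int.ModEq k (u * (h*i)) i := by
    rw [Int.modEq_iff_dvd]
    exact ⟨v * i, by linear_combination (-i) * huv⟩
  have h3 : Int.ModEq k (u * ((h*i) % k)) i := (h1.mul_left u).trans h2
  rw [Int.ModEq] at h3
  rw [h3, Int.emod_eq_of_lt hi hik]

lemma sum_mod_bij (h k : ℤ) (hk : 0 < k) (hcop : IsCoprime h k) (F : ℤ → ℚ) :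
    ∑ i ∈ Icc (1:ℤ) (k-1), F ((h*i) % k) = ∑ i ∈ Icc (1:ℤ) (k-1), F i := by
  obtain ⟨u, v, huv⟩ := id hcop
  have hcop' : IsCoprime u k := ⟨h, v, by linarith [huv]⟩
  apply Finset.sum_nbij' (fun i => (h*i) % k) (fun j => (u*j) % k)
  · intro i hi; exact mod_mem h k i hk hcop hi
  · intro j hj; exact mod_mem u k j hk hcop' hj
  · intro i hi
    simp only [mem_Icc] at hi
    exact mul_mod_cancel u h i k v hk huv (by omega) (by omega)
  · intro j hj
    simp only [mem_Icc] at hj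
    exact mul_mod_cancel h u j k v hk (by linarith) (by omega) (by omega)
  · intro i _; rfl

lemma sum_expand (s : Finset ℤ) (B : ℤ → ℚ) (c1 c2 c3 c4 c5 c6 : ℚ) (f : ℤ → ℚ)
    (hf : ∀ i ∈ s, f i = c1*(i:ℚ)^2 + c2*((i:ℚ)*B i) + c3*(i:ℚ) + c4*B i + c5 + c6*(B i)^2) :
    ∑ i ∈ s, f i = c1*(∑ i ∈ s, (i:ℚ)^2) + c2*(∑ i ∈ s, (i:ℚ)*B i) + c3*(∑ i ∈ s, (i:ℚ))
      + c4*(∑ i ∈ s, B i) + c5*s.card + c6*(∑ i ∈ s, (B i)^2) := by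
  rw [Finset.sum_congr rfl hf]
  simp only [Finset.sum_add_distrib, ← Finset.mul_sum, Finset.sum_const, nsmul_eq_mul]
  ring

lemma card_Icc_q (k : ℤ) (hk : 1 ≤ k) : (((Icc (1:ℤ) (k-1)).card : ℕ) : ℚ) = (k:ℚ) - 1 := by
  rw [Int.card_Icc]
  have h1 : k - 1 + 1 - 1 = k - 1 := by ring
  rw [h1]
  have h2 : ((k-1).toNat : ℤ) = k - 1 := Int.toNat_of_nonneg (by omega)
  have : (((k-1).toNat : ℤ) : ℚ) = ((k:ℚ) - 1) := by rw [h2]; push_cast; ring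
  exact_mod_cast this

lemma gauss2 (n : ℤ) (hn : 0 ≤ n) : ∑ j ∈ Icc (1:ℤ) n, 2*(j:ℚ) = (n:ℚ)^2 + n := by
  rw [← Finset.mul_sum]
  have h : n = (n.toNat : ℤ) := (Int.toNat_of_nonneg hn).symm
  rw [h, sum_Icc_id_nat]
  push_cast
  ring

lemma sum_sawsq (k : ℤ) (hk : 1 ≤ k) :
    ∑ i ∈ Icc (1:ℤ) (k-1), (saw ((i:ℚ)/k))^2 = (k-1)*(k-2)/(12*k) := by
  have hk0 : (k:ℚ) ≠ 0 := by positivity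
  have hf : ∀ i ∈ Icc (1:ℤ) (k-1), (saw ((i:ℚ)/k))^2 =
      (1/k^2)*(i:ℚ)^2 + 0*((i:ℚ)*((0:ℤ):ℚ)) + (-(1/k))*(i:ℚ) + 0*((0:ℤ):ℚ) + 1/4 + 0*(((0:ℤ):ℚ))^2 := by
    intro i hi
    simp only [mem_Icc] at hi
    have hnd : ¬ k ∣ i := fun hd => by have := Int.le_of_dvd (by omega) hd; omega
    rw [saw_div_eq i k (by omega) hnd, Int.ediv_eq_zero_of_lt (by omega) (by omega)]
    push_cast
    field_simp
    ring
  rw [sum_expand (Icc 1 (k-1)) (fun _ => ((0:ℤ):ℚ)) (1/k^2) 0 (-(1/k)) 0 (1/4) 0 _ hf,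
    sum_Icc_sq k hk, sum_Icc_id k hk, card_Icc_q k hk]
  field_simp
  ring

lemma sum_floor_eq (h k : ℤ) (hk : 0 < k) (hcop : IsCoprime h k) :
    ∑ i ∈ Icc (1:ℤ) (k-1), ((h*i/k : ℤ):ℚ) = (h-1)*(k-1)/2 := by
  have hk0 : (k:ℚ) ≠ 0 := by positivity
  have hmod : ∑ i ∈ Icc (1:ℤ) (k-1), (((h*i) % k : ℤ):ℚ) = (k:ℚ)*(k-1)/2 := by
    have := sum_mod_bij h k hk hcop (fun j => (j:ℚ))
    rw [this, sum_Icc_id k (by omega)]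
  have hsplit : ∀ i ∈ Icc (1:ℤ) (k-1), ((h*i/k : ℤ):ℚ)
      = ((h:ℚ)/k)*(i:ℚ) - (1/k)*(((h*i)%k : ℤ):ℚ) := by
    intro i _
    have hdm := Int.mul_ediv_add_emod (h*i) k
    have hdmq : (k:ℚ)*((h*i/k : ℤ):ℚ) + (((h*i)%k:ℤ):ℚ) = (h:ℚ)*i := by
      exact_mod_cast congrArg (fun z : ℤ => (z:ℚ)) hdm
    field_simp
    linarith
  rw [Finset.sum_congr rfl hsplit, Finset.sum_sub_distrib, ← Finset.mul_sum, ← Finset.mul_sum,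
    sum_Icc_id k (by omega), hmod]
  field_simp

lemma sum_sawsq_mul (h k : ℤ) (hk : 0 < k) (hcop : IsCoprime h k) :
    ∑ i ∈ Icc (1:ℤ) (k-1), (saw ((i:ℚ)*h/k))^2 = ∑ i ∈ Icc (1:ℤ) (k-1), (saw ((i:ℚ)/k))^2 := by
  have hk0 : (k:ℚ) ≠ 0 := by positivity
  have hpt : ∀ i ∈ Icc (1:ℤ) (k-1), (saw ((i:ℚ)*h/k))^2 = (saw ((((h*i)%k : ℤ):ℚ)/k))^2 := by
    intro i _
    have hdm := Int.mul_ediv_add_emod (h*i) k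
    have hdmq : (k:ℚ)*((h*i/k : ℤ):ℚ) + (((h*i)%k:ℤ):ℚ) = (h:ℚ)*i := by
      exact_mod_cast congrArg (fun z : ℤ => (z:ℚ)) hdm
    have heq : (i:ℚ)*h/k = (((h*i)%k : ℤ):ℚ)/k + ((h*i/k : ℤ):ℚ) := by
      field_simp
      linarith
    rw [heq, saw_add_int]
  rw [Finset.sum_congr rfl hpt]
  exact sum_mod_bij h k hk hcop (fun j => (saw ((j:ℚ)/k))^2)

lemma sum_floorsq (h k : ℤ) (hh : 0 < h) (hk : 0 < k) (hcop : IsCoprime h k) :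
    (∑ i ∈ Icc (1:ℤ) (k-1), (((h*i/k : ℤ):ℚ))^2) + ∑ i ∈ Icc (1:ℤ) (k-1), ((h*i/k : ℤ):ℚ)
      = ((k:ℚ)-1)*h*(h-1) - 2*(∑ j ∈ Icc (1:ℤ) (h-1), (j:ℚ)*((k*j/h : ℤ):ℚ)) := by
  have step1 : (∑ i ∈ Icc (1:ℤ) (k-1), (((h*i/k : ℤ):ℚ))^2) + ∑ i ∈ Icc (1:ℤ) (k-1), ((h*i/k : ℤ):ℚ)
      = ∑ i ∈ Icc (1:ℤ) (k-1), ∑ j ∈ Icc (1:ℤ) (h-1), (if j*k < h*i then 2*(j:ℚ) else 0) := by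
    rw [← Finset.sum_add_distrib]
    apply Finset.sum_congr rfl
    intro i hi
    simp only [mem_Icc] at hi
    have hb0 : 0 ≤ h*i/k := Int.ediv_nonneg (by nlinarith) (by omega)
    have hbh : h*i/k ≤ h - 1 := by
      have : h*i/k < h := by
        rw [Int.ediv_lt_iff_lt_mul hk]
        nlinarith
      omega
    have hfil : Icc (1:ℤ) (h*i/k) = (Icc (1:ℤ) (h-1)).filter (fun j => j*k < h*i) := by
      ext j
      simp only [mem_Icc, mem_filter]
      constructor
      · intro ⟨h1, h2⟩
        have hjk : j*k ≤ h*i := (Int.le_ediv_iff_mul_le hk).mp h2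
        have hne : j*k ≠ h*i := by
          intro heq
          exact not_dvd_mul h k i hcop (by simp only [mem_Icc]; omega) ⟨j, by rw [← heq]; ring⟩
        exact ⟨⟨h1, by omega⟩, by omega⟩
      · intro ⟨⟨h1, h2⟩, h3⟩
        exact ⟨h1, (Int.le_ediv_iff_mul_le hk).mpr (by omega)⟩
    rw [← gauss2 (h*i/k) hb0, hfil, Finset.sum_filter]
  rw [step1, Finset.sum_comm]
  have step2 : ∀ j ∈ Icc (1:ℤ) (h-1), ∑ i ∈ Icc (1:ℤ) (k-1), (if j*k < h*i then 2*(j:ℚ) else 0)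
      = 2*(j:ℚ)*((k:ℚ) - 1 - ((k*j/h : ℤ):ℚ)) := by
    intro j hj
    simp only [mem_Icc] at hj
    have hc0 : 0 ≤ k*j/h := Int.ediv_nonneg (by nlinarith) (by omega)
    have hck : k*j/h ≤ k - 1 := by
      have : k*j/h < k := by
        rw [Int.ediv_lt_iff_lt_mul hh]
        nlinarith
      omega
    have hfil : (Icc (1:ℤ) (k-1)).filter (fun i => j*k < h*i) = Icc (k*j/h + 1) (k-1) := by
      ext i
      simp only [mem_Icc, mem_filter]
      constructor
      · intro ⟨⟨h1, h2⟩, h3⟩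
        refine ⟨?_, h2⟩
        by_contra hcon
        push_neg at hcon
        have : i ≤ k*j/h := by omega
        have := (Int.le_ediv_iff_mul_le hh).mp this
        nlinarith
      · intro ⟨h1, h2⟩
        refine ⟨⟨by omega, h2⟩, ?_⟩
        by_contra hcon
        push_neg at hcon
        have : i ≤ k*j/h := (Int.le_ediv_iff_mul_le hh).mpr
          (by linarith [mul_comm i h, mul_comm j k])
        omega
    rw [← Finset.sum_filter, hfil, Finset.sum_const, nsmul_eq_mul, Int.card_Icc]
    have hcast : ((k - 1 + 1 - (k*j/h + 1)).toNat : ℚ) = (k:ℚ) - 1 - ((k*j/h : ℤ):ℚ) := by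
      have h2 : ((k - 1 + 1 - (k*j/h + 1)).toNat : ℤ) = k - 1 - k*j/h := by
        rw [Int.toNat_of_nonneg (by omega)]; ring
      have := congrArg (fun z : ℤ => (z:ℚ)) h2
      push_cast at this ⊢
      linarith
    rw [hcast]
    ring
  rw [Finset.sum_congr rfl step2]
  have expand : ∀ j ∈ Icc (1:ℤ) (h-1), 2*(j:ℚ)*((k:ℚ) - 1 - ((k*j/h : ℤ):ℚ))
      = 0*(j:ℚ)^2 + (-2)*((j:ℚ)*((k*j/h : ℤ):ℚ)) + (2*((k:ℚ)-1))*(j:ℚ) + 0*((k*j/h : ℤ):ℚ) + 0 + 0*(((k*j/h : ℤ):ℚ))^2 := by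
    intro j _
    ring
  rw [sum_expand (Icc 1 (h-1)) (fun j => ((k*j/h : ℤ):ℚ)) 0 (-2) (2*((k:ℚ)-1)) 0 0 0 _ expand,
    sum_Icc_id h (by omega)]
  ring

lemma dedekind_expand (h k : ℤ) (hh : 0 < h) (hk : 0 < k) (hcop : IsCoprime h k) :
    12*(k:ℚ)*dedekindSum h k = 2*(h:ℚ)*(k-1)*(2*k-1)
      - 12*(∑ i ∈ Icc (1:ℤ) (k-1), (i:ℚ)*((h*i/k : ℤ):ℚ)) - 3*k*(k-1) := by
  have hk0 : (k:ℚ) ≠ 0 := by positivity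
  have hf : ∀ i ∈ Icc (1:ℤ) (k-1), saw ((i:ℚ)/k) * saw ((i*h:ℚ)/k) =
      ((h:ℚ)/k^2)*(i:ℚ)^2 + (-(1/k))*((i:ℚ)*((h*i/k : ℤ):ℚ)) + (-((h:ℚ)+1)/(2*k))*(i:ℚ)
        + (1/2)*((h*i/k : ℤ):ℚ) + 1/4 + 0*(((h*i/k : ℤ):ℚ))^2 := by
    intro i hi
    simp only [mem_Icc] at hi
    have hnd : ¬ k ∣ i := fun hd => by have := Int.le_of_dvd (by omega) hd; omega
    have h1 : saw ((i:ℚ)/k) = (i:ℚ)/k - 1/2 := by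
      rw [saw_div_eq i k (by omega) hnd, Int.ediv_eq_zero_of_lt (by omega) (by omega)]
      push_cast; ring
    have hnd2 : ¬ k ∣ h*i := not_dvd_mul h k i hcop (by simp only [mem_Icc]; omega)
    have h2 : saw ((i*h:ℚ)/k) = (i:ℚ)*h/k - ((h*i/k : ℤ):ℚ) - 1/2 := by
      have hcast : ((i:ℚ)*(h:ℚ)) = (((h*i:ℤ)):ℚ) := by push_cast; ring
      rw [show (i:ℚ)*(h:ℚ)/(k:ℚ) = ((h*i:ℤ):ℚ)/(k:ℚ) by rw [hcast],
        saw_div_eq (h*i) k hk hnd2]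
    rw [h1, h2]
    field_simp
    ring
  rw [dedekindSum,
    sum_expand (Icc 1 (k-1)) (fun i => ((h*i/k : ℤ):ℚ)) ((h:ℚ)/k^2) (-(1/k)) (-((h:ℚ)+1)/(2*k)) (1/2) (1/4) 0 _ hf,
    sum_Icc_sq k (by omega), sum_Icc_id k (by omega), sum_floor_eq h k hk hcop,
    card_Icc_q k (by omega)]
  field_simp
  ring

lemma sawsq_rel (h k : ℤ) (hh : 0 < h) (hk : 0 < k) (hcop : IsCoprime h k) :
    2*(h:ℚ)^2*k*(k-1)*(2*k-1) - 24*(h:ℚ)*k*(∑ i ∈ Icc (1:ℤ) (k-1), (i:ℚ)*((h*i/k : ℤ):ℚ))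
      - 6*(h:ℚ)*k^2*(k-1) + 6*(k:ℚ)^2*((h:ℚ)-1)*(k-1) + 3*(k:ℚ)^2*(k-1)
      + 12*(k:ℚ)^2*(∑ i ∈ Icc (1:ℤ) (k-1), (((h*i/k : ℤ):ℚ))^2) = (k:ℚ)*(k-1)*(k-2) := by
  have hk0 : (k:ℚ) ≠ 0 := by positivity
  have hf : ∀ i ∈ Icc (1:ℤ) (k-1), (saw ((i:ℚ)*h/k))^2 =
      ((h:ℚ)^2/k^2)*(i:ℚ)^2 + (-(2*(h:ℚ)/k))*((i:ℚ)*((h*i/k : ℤ):ℚ)) + (-((h:ℚ)/k))*(i:ℚ)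
        + 1*((h*i/k : ℤ):ℚ) + 1/4 + 1*(((h*i/k : ℤ):ℚ))^2 := by
    intro i hi
    simp only [mem_Icc] at hi
    have hnd2 : ¬ k ∣ h*i := not_dvd_mul h k i hcop (by simp only [mem_Icc]; omega)
    have h2 : saw ((i:ℚ)*h/k) = (i:ℚ)*h/k - ((h*i/k : ℤ):ℚ) - 1/2 := by
      have hcast : ((i:ℚ)*(h:ℚ)) = (((h*i:ℤ)):ℚ) := by push_cast; ring
      rw [show (i:ℚ)*(h:ℚ)/(k:ℚ) = ((h*i:ℤ):ℚ)/(k:ℚ) by rw [hcast],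
        saw_div_eq (h*i) k hk hnd2]
    rw [h2]
    field_simp
    ring
  have E2 : ((h:ℚ)^2/k^2)*(∑ i ∈ Icc (1:ℤ) (k-1), (i:ℚ)^2)
      + (-(2*(h:ℚ)/k))*(∑ i ∈ Icc (1:ℤ) (k-1), (i:ℚ)*((h*i/k : ℤ):ℚ))
      + (-((h:ℚ)/k))*(∑ i ∈ Icc (1:ℤ) (k-1), (i:ℚ))
      + 1*(∑ i ∈ Icc (1:ℤ) (k-1), ((h*i/k : ℤ):ℚ)) + (1/4)*((Icc (1:ℤ) (k-1)).card)
      + 1*(∑ i ∈ Icc (1:ℤ) (k-1), (((h*i/k : ℤ):ℚ))^2) = ((k:ℚ)-1)*((k:ℚ)-2)/(12*k) := by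
    rw [← sum_expand (Icc 1 (k-1)) (fun i => ((h*i/k : ℤ):ℚ)) ((h:ℚ)^2/k^2) (-(2*(h:ℚ)/k)) (-((h:ℚ)/k)) 1 (1/4) 1 _ hf]
    rw [sum_sawsq_mul h k hk hcop, sum_sawsq k (by omega)]
  rw [sum_Icc_sq k (by omega), sum_Icc_id k (by omega), sum_floor_eq h k hk hcop,
    card_Icc_q k (by omega)] at E2
  have hSB2 : (∑ i ∈ Icc (1:ℤ) (k-1), (((h*i/k : ℤ):ℚ))^2)
      = ((k:ℚ)-1)*((k:ℚ)-2)/(12*k) - ((h:ℚ)^2/k^2)*((k:ℚ)*(k-1)*(2*k-1)/6)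
        + (2*(h:ℚ)/k)*(∑ i ∈ Icc (1:ℤ) (k-1), (i:ℚ)*((h*i/k : ℤ):ℚ))
        + ((h:ℚ)/k)*((k:ℚ)*(k-1)/2) - ((h:ℚ)-1)*((k:ℚ)-1)/2 - ((k:ℚ)-1)/4 := by
    linarith
  rw [hSB2]
  field_simp
  ring

lemma reciprocity (h k : ℤ) (hh : 0 < h) (hk : 0 < k) (hcop : IsCoprime h k) :
    24*(h:ℚ)*k^2*(dedekindSum h k + dedekindSum k h)
      = 2*(k:ℚ)*((h:ℚ)^2 + (k:ℚ)^2 + 1 - 3*(h:ℚ)*k) := by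
  have P1 := dedekind_expand h k hh hk hcop
  have P2 := dedekind_expand k h hk hh hcop.symm
  have P3 := sawsq_rel h k hh hk hcop
  have P4 := sum_floorsq h k hh hk hcop
  have P5 := sum_floor_eq h k hk hcop
  linear_combination 2*(h:ℚ)*k*P1 + 2*(k:ℚ)^2*P2 + P3 - 12*(k:ℚ)^2*P4 + 12*(k:ℚ)^2*P5

lemma one_lt_ncf (l : List ℤ) (hne : l ≠ []) (h2 : ∀ x ∈ l, 2 ≤ x) : 1 < ncf l := by
  induction l with
  | nil => simp at hne
  | cons a tail ih =>
    cases tail with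
    | nil =>
      have := h2 a (by simp)
      show (1:ℚ) < ncf [a]
      rw [ncf]
      exact_mod_cast (by omega : (1:ℤ) < a)
    | cons b rest =>
      have ht : 1 < ncf (b :: rest) := ih (by simp) (fun x hx => h2 x (by simp [hx]))
      have ha : (2:ℚ) ≤ (a:ℚ) := by exact_mod_cast h2 a (by simp)
      show (1:ℚ) < (a:ℚ) - 1 / ncf (b :: rest)
      have h1 : 1 / ncf (b :: rest) < 1 := by
        rw [div_lt_one (by linarith)]
        linarith
      linarith

lemma dedekind_mod (q q' p : ℤ) (hp : 0 < p) (hd : p ∣ (q - q')) :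
    dedekindSum q p = dedekindSum q' p := by
  obtain ⟨c, hc⟩ := hd
  apply Finset.sum_congr rfl
  intro i _
  have hp0 : (p:ℚ) ≠ 0 := by positivity
  congr 1
  have : (i:ℚ) * q / p = (i:ℚ) * q' / p + ((i*c : ℤ):ℚ) := by
    have hq : (q:ℚ) = (q':ℚ) + (p:ℚ)*c := by exact_mod_cast congrArg (fun z:ℤ => (z:ℚ)) (by omega : q = q' + p*c)
    rw [hq]
    push_cast
    field_simp
  rw [this, saw_add_int]

lemma dedekind_neg (q p : ℤ) : dedekindSum (-q) p = -dedekindSum q p := by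
  rw [dedekindSum, dedekindSum, ← Finset.sum_neg_distrib]
  apply Finset.sum_congr rfl
  intro i _
  have : ((i:ℚ) * ((-q:ℤ):ℚ)) / p = -((i:ℚ) * q / p) := by push_cast; ring
  rw [this, saw_neg]
  ring

lemma main_lemma : ∀ (e : List ℤ), (∀ x ∈ e, 2 ≤ x) → ∀ p q q' : ℤ, 0 < q → q < p →
    0 < q' → q' < p → p ∣ (q*q' - 1) → ncf e = (p:ℚ)/q →
    12 * dedekindSum q p - (e.sum : ℚ) + 3 * e.length = ((q : ℚ) + q') / p := by
  intro e
  induction e with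
  | nil =>
    intro _ p q q' hq0 hqp hq'0 hq'p hdvd hval
    exfalso
    rw [ncf] at hval
    have hq : (0:ℚ) < q := by exact_mod_cast hq0
    have hp : (0:ℚ) < p := by exact_mod_cast (by omega : (0:ℤ) < p)
    have : (0:ℚ) < (p:ℚ)/q := by positivity
    rw [← hval] at this
    exact lt_irrefl 0 this
  | cons a tail ih =>
    intro h2 p q q' hq0 hqp hq'0 hq'p hdvd hval
    have hp0 : (0:ℤ) < p := by omega
    have hpq0 : ((p:ℚ)) ≠ 0 := by positivity
    have hqq0 : ((q:ℚ)) ≠ 0 := by positivity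
    obtain ⟨m, hm⟩ := hdvd
    cases tail with
    | nil =>
      -- base case : e = [a], so p/q = a, q = 1, q' = 1, p = a
      rw [ncf] at hval
      have hpaq : p = a * q := by
        have : (a:ℚ) * q = p := by field_simp at hval; linarith
        exact_mod_cast this.symm
      have hq1 : q = 1 := by
        have hdq : q ∣ 1 := ⟨q' - a*m, by linear_combination -hm - m*hpaq⟩
        have := Int.le_of_dvd one_pos hdq
        omega
      subst hq1
      have hpa : p = a := by linarith [hpaq]
      have hq'1 : q' = 1 := by
        have hc : p * m = q' - 1 := by linarith
        have hm0 : m = 0 := by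
          rcases lt_trichotomy m 0 with hmlt | hmeq | hmgt
          · nlinarith [mul_le_mul_of_nonneg_left (by omega : m ≤ -1) (by omega : (0:ℤ) ≤ p)]
          · exact hmeq
          · nlinarith [mul_le_mul_of_nonneg_left (by omega : (1:ℤ) ≤ m) (by omega : (0:ℤ) ≤ p)]
        subst hm0
        simp at hc
        omega
      subst hq'1
      have hded : dedekindSum 1 p = ∑ i ∈ Icc (1:ℤ) (p-1), (saw ((i:ℚ)/p))^2 := by
        rw [dedekindSum]
        apply Finset.sum_congr rfl
        intro i _
        norm_num [sq]
      rw [hded, sum_sawsq p (by omega)]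
      simp only [List.sum_cons, List.sum_nil, List.length_cons, List.length_nil]
      have hpa' : (a:ℚ) = (p:ℚ) := by exact_mod_cast hpa.symm
      push_cast
      rw [hpa']
      field_simp
      ring
    | cons b rest =>
      -- inductive step
      have h2t : ∀ x ∈ (b :: rest), 2 ≤ x := fun x hx => h2 x (by simp [hx])
      have ht : 1 < ncf (b :: rest) := one_lt_ncf _ (by simp) h2t
      have ht0 : ncf (b :: rest) ≠ 0 := by linarith
      have hvv : (a:ℚ) - 1 / ncf (b :: rest) = (p:ℚ)/q := hval
      set t := ncf (b :: rest) with htdef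
      -- r = a*q - p
      have hinv_t : 1/t = ((a:ℚ)*q - p)/q := by
        field_simp at hvv ⊢
        linarith
      have h1t_pos : 0 < 1/t := by positivity
      have h1t_lt : 1/t < 1 := by rw [div_lt_one (by linarith)]; linarith
      have hr0 : 0 < a*q - p := by
        have : (0:ℚ) < ((a:ℚ)*q - p)/q := hinv_t ▸ h1t_pos
        have hq : (0:ℚ) < q := by exact_mod_cast hq0
        have := (div_pos_iff.mp this)
        rcases this with ⟨h1, _⟩ | ⟨_, h2'⟩
        · exact_mod_cast h1
        · linarith
      have hrq : a*q - p < q := by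
        have h1 : ((a:ℚ)*q - p)/q < 1 := hinv_t ▸ h1t_lt
        have hq : (0:ℚ) < q := by exact_mod_cast hq0
        rw [div_lt_one hq] at h1
        exact_mod_cast h1
      have htval : ncf (b :: rest) = (q:ℚ)/(a*q - p : ℤ) := by
        rw [← htdef]
        have hrne : ((a:ℚ)*q - p) ≠ 0 := by
          have : (0:ℚ) < (a:ℚ)*q - p := by exact_mod_cast hr0
          linarith
        have h1 : t * (((a:ℚ)*q - p)/q) = 1 := by
          rw [← hinv_t]; field_simp
        push_cast
        field_simp at h1 ⊢
        linear_combination h1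
      -- q ≥ 2
      have hq2 : 2 ≤ q := by
        by_contra hcon
        have hq1 : q = 1 := by omega
        subst hq1
        have : 1/t = (a:ℚ) - p := by
          field_simp at hvv
          linarith
        have hint : ((a - p : ℤ):ℚ) = 1/t := by push_cast; linarith
        have h1 : (0:ℤ) < a - p := by
          have : (0:ℚ) < ((a-p:ℤ):ℚ) := by rw [hint]; exact h1t_pos
          exact_mod_cast this
        have h2' : (a - p : ℤ) < 1 := by
          have : ((a-p:ℤ):ℚ) < 1 := by rw [hint]; exact h1t_lt
          exact_mod_cast this
        omega
      -- m bounds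
      have hm0 : 0 < m := by nlinarith
      have hmq : m < q := by nlinarith
      have hdvd2 : q ∣ ((a*q - p)*m - 1) := ⟨a*m - q', by linear_combination hm⟩
      have IH := ih h2t q (a*q - p) m hr0 hrq hm0 hmq hdvd2 htval
      -- reciprocity
      have hcop : IsCoprime q p := ⟨q', -m, by linear_combination hm⟩
      have recip := reciprocity q p hq0 hp0 hcop
      have hneg : dedekindSum p q = -dedekindSum (a*q - p) q := by
        rw [dedekind_mod p (-(a*q-p)) q hq0 ⟨a, by ring⟩, dedekind_neg]
      rw [hneg] at recip
      -- assemble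
      have hq0' : ((q:ℚ)) ≠ 0 := hqq0
      rw [eq_div_iff hq0'] at IH
      have hmcast : (q:ℚ)*q' - 1 = (p:ℚ)*m := by exact_mod_cast congrArg (fun z:ℤ => (z:ℚ)) hm
      simp only [List.sum_cons, List.length_cons]
      rw [eq_div_iff hpq0]
      push_cast [List.map_cons, List.sum_cons, List.length_cons] at IH ⊢
      have hcancel : (2*(q:ℚ)*p) ≠ 0 := by positivity
      apply mul_left_cancel₀ hcancel
      linear_combination recip + 2*(p:ℚ)^2*IH + (-2*(p:ℚ))*hmcast

theorem stmt15 (p : ℕ) (hp : p.Prime) (q q' : ℤ)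
    (hq0 : 0 < q) (hqp : q < p) (hq'0 : 0 < q') (hq'p : q' < p)
    (hinv : q * q' ≡ 1 [ZMOD (p : ℤ)])
    (e : List ℤ) (hne : e ≠ []) (h2 : ∀ x ∈ e, 2 ≤ x)
    (hval : ncf e = (p : ℚ) / q) :
    12 * dedekindSum q p - (e.sum : ℚ) + 3 * e.length = ((q : ℚ) + q') / p := by
  have hdvd : (p:ℤ) ∣ (q*q' - 1) := by
    obtain ⟨c, hc⟩ := Int.ModEq.dvd hinv
    exact ⟨-c, by linear_combination -hc⟩
  have hval' : ncf e = (((p:ℤ)):ℚ)/q := by exact_mod_cast hval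
  have := main_lemma e h2 (p:ℤ) q q' hq0 hqp hq'0 hq'p hdvd hval'
  exact_mod_cast this
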